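/- Let ρ be a rank 2 Drinfeld F_q[t]-module over \overline{k} with ρ_t = θ + κτ + τ², κ ∈ \overline{k}, and let M = M_ρ = \overline{k}(t) ⊗_{\overline{k}[t]} 𝓜_ρ be its associated t-motive, a 2-dimensional \overline{k}(t)-vector space with basis m = [m₁,m₂]^tr and σ-action σm = Φm, Φ = [[0,1],[t−θ, −κ^{(−1)}]]. Then M is simple as a left \overline{k}(t)[σ,σ^{−1}]-module. -/

import Mathlib

/-!
STATEMENT 6: Let `ρ` be a rank 2 Drinfeld `𝔽_q[t]`-module over `k̄` with `ρ_t = θ + κτ + τ²`,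
and let `M = M_ρ = k̄(t) ⊗_{k̄[t]} 𝓜_ρ` be its associated `t`-motive, the 2-dimensional
`k̄(t)`-vector space with basis `m = [m₁,m₂]ᵗ` and `σ`-action `σm = Φm`,
`Φ = [[0,1],[t−θ, −κ⁽⁻¹⁾]]`.  Then `M` is simple as a left `k̄(t)[σ,σ⁻¹]`-module.

We model `M` as `Fin 2 → k̄(t)` (coordinates with respect to the basis `m`), so that
`σ(v) = (v⁽⁻¹⁾)ᵗ Φ` (row-vector times matrix), where `v⁽⁻¹⁾` applies the inverse Frobenius
twist `tw : k̄(t) ≃+* k̄(t)` (fixing `t`, applying `x ↦ x^{1/q}` to coefficients) to each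
coordinate.  A `k̄(t)[σ,σ⁻¹]`-submodule is a `k̄(t)`-subspace stable under `σ` and `σ⁻¹`;
simplicity says every such subspace is `⊥` or `⊤`.
-/

noncomputable section

open Polynomial

/-- Key polynomial degree lemma: the equation `F·F^φ = F·G^φ·C κ' + (X − C θ)·G·G^φ`
has no solution with `F, G ≠ 0`. -/
lemma no_poly_sol {kb : Type} [Field kb] (φ : kb ≃+* kb) (θk κ' : kb)
    {F G : kb[X]} (hF : F ≠ 0) (hG : G ≠ 0)
    (h : F * F.map (φ : kb →+* kb) =
      F * G.map (φ : kb →+* kb) * C κ' + (X - C θk) * G * G.map (φ : kb →+* kb)) :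
    False := by
  set F' := F.map (φ : kb →+* kb) with hF'
  set G' := G.map (φ : kb →+* kb) with hG'
  have hF'0 : F' ≠ 0 := by
    simpa [hF'] using (Polynomial.map_ne_zero_iff (f := (φ : kb →+* kb)) φ.injective).mpr hF
  have hG'0 : G' ≠ 0 := by
    simpa [hG'] using (Polynomial.map_ne_zero_iff (f := (φ : kb →+* kb)) φ.injective).mpr hG
  set m := F.natDegree with hm
  set n := G.natDegree with hn
  have hF'd : F'.natDegree = m := by rw [hF', natDegree_map]
  have hG'd : G'.natDegree = n := by rw [hG', natDegree_map]
  have hL : (F * F').natDegree = m + m := by rw [natDegree_mul hF hF'0, hF'd]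
  have hX : (X - C θk) ≠ 0 := X_sub_C_ne_zero θk
  have hT2 : ((X - C θk) * G * G').natDegree = 1 + n + n := by
    rw [natDegree_mul (mul_ne_zero hX hG) hG'0, natDegree_mul hX hG, natDegree_X_sub_C, hG'd]
  have hT1 : (F * G' * C κ').natDegree ≤ m + n := by
    calc (F * G' * C κ').natDegree ≤ (F * G').natDegree + (C κ').natDegree :=
          natDegree_mul_le
      _ ≤ F.natDegree + G'.natDegree + 0 := by
          gcongr
          · exact natDegree_mul_le
          · exact natDegree_C κ' ▸ le_rfl
      _ = m + n := by rw [hG'd]; ring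
  rcases le_or_gt m n with hmn | hmn
  · -- RHS has exact degree 1 + 2n, LHS degree 2m ≤ 2n
    have hlt : (F * G' * C κ').natDegree < ((X - C θk) * G * G').natDegree := by
      rw [hT2]; omega
    have : (F * G' * C κ' + (X - C θk) * G * G').natDegree = 1 + n + n := by
      rw [natDegree_add_eq_right_of_natDegree_lt hlt, hT2]
    rw [h, this] at hL
    omega
  · -- LHS degree 2m, RHS degree ≤ max(m+n, 1+2n) < 2m
    have hle : (F * G' * C κ' + (X - C θk) * G * G').natDegree ≤
        max (m + n) (1 + n + n) := by
      refine le_trans (natDegree_add_le _ _) ?_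
      exact max_le_max hT1 hT2.le
    rw [h] at hL
    omega


set_option synthInstance.maxHeartbeats 1000000 in
theorem drinfeld_t_motive_is_simple
    (Fq : Type) [Field Fq] [Fintype Fq]
    (p q : ℕ) (hp : p.Prime) (hpq : ∃ e : ℕ, 0 < e ∧ q = p ^ e)
    (hcard : Fintype.card Fq = q)
    (kb : Type) [Field kb] [Algebra (RatFunc Fq) kb] [IsAlgClosure (RatFunc Fq) kb]
    (θk : kb) (hθk : θk = algebraMap (RatFunc Fq) kb RatFunc.X)
    -- the inverse q-power Frobenius of k̄
    (φ : kb ≃+* kb) (hφ : ∀ x : kb, φ (x ^ q) = x)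
    -- the inverse twist h ↦ h⁽⁻¹⁾ on k̄(t)
    (tw : RatFunc kb ≃+* RatFunc kb)
    (htwC : ∀ x : kb, tw (RatFunc.C x) = RatFunc.C (φ x))
    (htwX : tw RatFunc.X = RatFunc.X)
    (κ : kb) :
    letI Φ : Matrix (Fin 2) (Fin 2) (RatFunc kb) :=
      ![![0, 1], ![RatFunc.X - RatFunc.C θk, -RatFunc.C (φ κ)]]
    -- σ : M → M, σ(v) = (v⁽⁻¹⁾) ᵥ* Φ;  M is simple as a k̄(t)[σ,σ⁻¹]-module:
    ∀ V : Submodule (RatFunc kb) (Fin 2 → RatFunc kb),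
      (∀ v ∈ V, Matrix.vecMul (fun i => tw (v i)) Φ ∈ V) →
      (∀ v : Fin 2 → RatFunc kb, Matrix.vecMul (fun i => tw (v i)) Φ ∈ V → v ∈ V) →
      V = ⊥ ∨ V = ⊤ := by
  intro V hσ _
  -- the twist of a polynomial is the coefficientwise-mapped polynomial
  have htwP : ∀ pp : kb[X], tw (algebraMap kb[X] (RatFunc kb) pp) =
      algebraMap kb[X] (RatFunc kb) (pp.map (φ : kb →+* kb)) := by
    intro pp
    have : (tw : RatFunc kb →+* RatFunc kb).comp (algebraMap kb[X] (RatFunc kb)) =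
        (algebraMap kb[X] (RatFunc kb)).comp (Polynomial.mapRingHom (φ : kb →+* kb)) := by
      apply Polynomial.ringHom_ext
      · intro x
        simp [RatFunc.algebraMap_C, htwC]
      · simp [RatFunc.algebraMap_X, htwX]
    exact RingHom.congr_fun this pp
  by_cases hbot : V = ⊥
  · exact Or.inl hbot
  right
  obtain ⟨v, hvV, hv0⟩ := Submodule.ne_bot_iff V |>.mp hbot
  set w : Fin 2 → RatFunc kb :=
    Matrix.vecMul (fun i => tw (v i))
      ![![0, 1], ![RatFunc.X - RatFunc.C θk, -RatFunc.C (φ κ)]] with hw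
  have hwV : w ∈ V := hσ v hvV
  have hw0 : w 0 = tw (v 1) * (RatFunc.X - RatFunc.C θk) := by
    simp [hw, Matrix.vecMul, dotProduct, Fin.sum_univ_two]
  have hw1 : w 1 = tw (v 0) - tw (v 1) * RatFunc.C (φ κ) := by
    simp [hw, Matrix.vecMul, dotProduct, Fin.sum_univ_two]
    ring
  -- the determinant of [v; w] is nonzero
  have hdet : v 0 * w 1 - v 1 * w 0 ≠ 0 := by
    intro hd
    rw [hw0, hw1] at hd
    by_cases h1 : v 1 = 0
    · rw [h1, map_zero] at hd
      have hmul : v 0 * tw (v 0) = 0 := by linear_combination hd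
      have hv00 : v 0 = 0 := by
        rcases mul_eq_zero.mp hmul with h | h
        · exact h
        · exact tw.injective (by simpa using h)
      apply hv0
      funext i; fin_cases i <;> simp [hv00, h1]
    · -- c = v0/v1 satisfies c · tw c − c · C (φ κ) = X − C θ
      set c : RatFunc kb := v 0 / v 1 with hc
      have htw1 : tw (v 1) ≠ 0 := fun h => h1 (tw.injective (by simpa using h))
      have hceq : c * tw c - c * RatFunc.C (φ κ) = RatFunc.X - RatFunc.C θk := by
        have htwc : tw c = tw (v 0) / tw (v 1) := by rw [hc, map_div₀]
        rw [hc, htwc]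
        field_simp
        linear_combination hd
      -- c ≠ 0
      have hcne : c ≠ 0 := by
        intro h0
        rw [h0, map_zero, zero_mul, zero_mul, sub_zero] at hceq
        have : (algebraMap kb[X] (RatFunc kb)) (X - C θk) =
            algebraMap kb[X] (RatFunc kb) 0 := by
          rw [map_sub, RatFunc.algebraMap_X, RatFunc.algebraMap_C, map_zero, ← hceq]
        exact X_sub_C_ne_zero θk (RatFunc.algebraMap_injective kb this)
      set F := c.num with hF
      set G := c.denom with hGd
      have hGne : G ≠ 0 := c.denom_ne_zero
      have hFne : F ≠ 0 := RatFunc.num_ne_zero hcne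
      have hcval : c = algebraMap kb[X] (RatFunc kb) F / algebraMap kb[X] (RatFunc kb) G :=
        (RatFunc.num_div_denom c).symm
      have hGmap : algebraMap kb[X] (RatFunc kb) G ≠ 0 :=
        RatFunc.algebraMap_ne_zero hGne
      have hG'map : algebraMap kb[X] (RatFunc kb) (G.map (φ : kb →+* kb)) ≠ 0 :=
        RatFunc.algebraMap_ne_zero
          ((Polynomial.map_ne_zero_iff φ.injective).mpr hGne)
      have htwc2 : tw c = algebraMap kb[X] (RatFunc kb) (F.map (φ : kb →+* kb)) /
          algebraMap kb[X] (RatFunc kb) (G.map (φ : kb →+* kb)) := by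
        rw [hcval, map_div₀, htwP, htwP]
      have hpoly : F * F.map (φ : kb →+* kb) =
          F * G.map (φ : kb →+* kb) * C (φ κ) +
            (X - C θk) * G * G.map (φ : kb →+* kb) := by
        apply RatFunc.algebraMap_injective kb
        simp only [map_mul, map_add, map_sub, RatFunc.algebraMap_C, RatFunc.algebraMap_X]
        rw [htwc2, hcval] at hceq
        field_simp at hceq
        have h2 : ((algebraMap kb[X] (RatFunc kb)) F *
              (algebraMap kb[X] (RatFunc kb)) (Polynomial.map (φ : kb →+* kb) F) -
            ((algebraMap kb[X] (RatFunc kb)) F *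
                (algebraMap kb[X] (RatFunc kb)) (Polynomial.map (φ : kb →+* kb) G) *
                  RatFunc.C (φ κ) +
              (RatFunc.X - RatFunc.C θk) * (algebraMap kb[X] (RatFunc kb)) G *
                (algebraMap kb[X] (RatFunc kb)) (Polynomial.map (φ : kb →+* kb) G))) *
            (algebraMap kb[X] (RatFunc kb)) G = 0 := by
            linear_combination (algebraMap kb[X] (RatFunc kb) G) * hceq
        rcases mul_eq_zero.mp h2 with h3 | h3
        · linear_combination h3
        · exact absurd h3 hGmap
      exact no_poly_sol φ θk (φ κ) hFne hGne hpoly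
  -- v, w span, so V = ⊤
  apply eq_top_iff.mpr
  intro x _
  set d := v 0 * w 1 - v 1 * w 0 with hd
  have hx : x = ((x 0 * w 1 - x 1 * w 0) / d) • v + ((v 0 * x 1 - v 1 * x 0) / d) • w := by
    funext i
    have hdet' : w 1 * v 0 - w 0 * v 1 ≠ 0 := by
      rw [mul_comm (w 1), mul_comm (w 0)]; exact hdet
    fin_cases i <;> (simp [hd]; field_simp; ring)
  rw [hx]
  exact V.add_mem (V.smul_mem _ hvV) (V.smul_mem _ hwV)


end
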